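/- Let H and V be real Hilbert spaces, let Γ : H → V be a continuous linear map, let (ψ_j)_{j≥1} be a complete system in V, and set Ů_s := {u ∈ H | ⟨ψ_j, Γu⟩ = 0 for 1 ≤ j ≤ s} and Ů := ker Γ. Let J : H → ℝ be convex, continuous, and Gateaux differentiable with gradient J' : H → H, i.e. for all u, v ∈ H the limit of (J(u + t·v) − J(u))/t as t → 0 exists and equals ⟨J'(u), v⟩. Assume that for some s₀: (i) J grows at infinity on Ů_{s₀}, and (ii) there is a continuous nondecreasing function c : [0,∞) → [0,∞) with c(0) = 0 and c(t) > 0 for t > 0 such that ⟨J'(u) − J'(v), u − v⟩ ≥ c(‖u − v‖) for all u, v ∈ Ů_{s₀}. Then J has a unique minimizer ū on Ů and a unique minimizer ū_s on each Ů_s with s ≥ s₀, and ū_s → ū in the norm of H and J(ū_s) → J(ū) as s → ∞. -/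

import Mathlib

open Filter Topology

lemma aux_subgrad {H : Type*} [NormedAddCommGroup H] [InnerProductSpace ℝ H]
    (J : H → ℝ) (hconv : ConvexOn ℝ Set.univ J) (J' : H → H)
    (hJ' : ∀ u v : H,
      Tendsto (fun t : ℝ => (J (u + t • v) - J u) / t) (𝓝[≠] 0) (𝓝 (inner ℝ (J' u) v : ℝ)))
    (u w : H) : (inner ℝ (J' u) w : ℝ) ≤ J (u + w) - J u := by
  have hsub : Set.Ioi (0:ℝ) ⊆ {(0:ℝ)}ᶜ := fun x hx => (Set.mem_Ioi.mp hx).ne'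
  have h := (hJ' u w).mono_left (nhdsWithin_mono _ hsub)
  refine le_of_tendsto h ?_
  filter_upwards [Ioc_mem_nhdsGT_of_mem (by norm_num : (0:ℝ) ∈ Set.Ico (0:ℝ) 1)] with t ht
  have ht0 : (0:ℝ) < t := ht.1
  have ht1 : t ≤ 1 := ht.2
  have hcv := hconv.2 (Set.mem_univ u) (Set.mem_univ (u + w))
    (by linarith : (0:ℝ) ≤ 1 - t) ht0.le (by ring)
  have e : (1 - t) • u + t • (u + w) = u + t • w := by module
  rw [e] at hcv
  simp only [smul_eq_mul] at hcv
  rw [div_le_iff₀ ht0]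
  nlinarith [hcv]
lemma key_min {H : Type*} [NormedAddCommGroup H] [InnerProductSpace ℝ H] [CompleteSpace H]
    (J : H → ℝ) (hcont : Continuous J) (c : ℝ → ℝ)
    (hc_mono : MonotoneOn c (Set.Ici 0)) (hcpos : ∀ t : ℝ, 0 < t → 0 < c t)
    (S : Set H) (hS : IsClosed S) (hconvS : Convex ℝ S) (hne : S.Nonempty)
    (L : ℝ) (hL : ∀ u ∈ S, L ≤ J u)
    (hunif : ∀ x ∈ S, ∀ y ∈ S,
      (1/2) * c (‖x - y‖/2) ≤ J x + J y - 2 * J ((1/2:ℝ) • (x + y))) :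
    ∃ xb, xb ∈ S ∧ (∀ u ∈ S, J xb ≤ J u) ∧
      ∀ w, w ∈ S → (∀ u ∈ S, J w ≤ J u) → w = xb := by
  have hbdd : BddBelow (J '' S) := ⟨L, by rintro y ⟨u, hu, rfl⟩; exact hL u hu⟩
  have hne' : (J '' S).Nonempty := hne.image J
  set μ := sInf (J '' S) with hμdef
  have hμle : ∀ u ∈ S, μ ≤ J u := fun u hu => csInf_le hbdd ⟨u, hu, rfl⟩
  have hmid : ∀ a ∈ S, ∀ b ∈ S, (1/2:ℝ) • (a + b) ∈ S := by
    intro a ha b hb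
    have := hconvS ha hb (by norm_num : (0:ℝ) ≤ 1/2) (by norm_num : (0:ℝ) ≤ 1/2) (by norm_num)
    rwa [smul_add]
  have hseq : ∀ n : ℕ, ∃ x ∈ S, J x < μ + 1/(n+1) := by
    intro n
    have h1 : μ < μ + 1/((n:ℝ)+1) := by
      have : (0:ℝ) < 1/((n:ℝ)+1) := by positivity
      linarith
    obtain ⟨y, hy, hlt⟩ := exists_lt_of_csInf_lt hne' h1
    obtain ⟨u, hu, rfl⟩ := hy
    exact ⟨u, hu, hlt⟩
  choose x hxS hxJ using hseq
  have hgap : ∀ ε > (0:ℝ), ∀ a ∈ S, ∀ b ∈ S,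
      J a + J b - 2*μ < (1/2) * c (ε/2) → ‖a - b‖ < ε := by
    intro ε hε a ha b hb hlt
    have h1 := hunif a ha b hb
    have h2 : μ ≤ J ((1/2:ℝ) • (a + b)) := hμle _ (hmid a ha b hb)
    have h4 : c (‖a-b‖/2) < c (ε/2) := by linarith
    by_contra hcon
    push_neg at hcon
    have : c (ε/2) ≤ c (‖a-b‖/2) :=
      hc_mono (Set.mem_Ici.mpr (by positivity)) (Set.mem_Ici.mpr (by positivity)) (by linarith)
    linarith
  have hcauchy : CauchySeq x := by
    rw [Metric.cauchySeq_iff]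
    intro ε hε
    have hc2 : 0 < (1/2) * c (ε/2) := by
      have := hcpos (ε/2) (half_pos hε); linarith
    obtain ⟨N, hN⟩ := exists_nat_gt (2 / ((1/2) * c (ε/2)))
    refine ⟨N, fun m hm n hn => ?_⟩
    rw [dist_eq_norm]
    apply hgap ε hε _ (hxS m) _ (hxS n)
    have hμm := hxJ m
    have hμn := hxJ n
    have hm1 : 1/((m:ℝ)+1) ≤ 1/((N:ℝ)+1) := by
      apply one_div_le_one_div_of_le (by positivity)
      have : (N:ℝ) ≤ m := by exact_mod_cast hm
      linarith
    have hn1 : 1/((n:ℝ)+1) ≤ 1/((N:ℝ)+1) := by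
      apply one_div_le_one_div_of_le (by positivity)
      have : (N:ℝ) ≤ n := by exact_mod_cast hn
      linarith
    have hNlt : 2/((N:ℝ)+1) < (1/2)*c (ε/2) := by
      rw [div_lt_iff₀ (by positivity)]
      have h2N : 2 < (N:ℝ) * ((1/2)*c (ε/2)) := by
        have := (div_lt_iff₀ hc2).mp hN
        linarith
      nlinarith [hc2]
    have hsplit : 2/((N:ℝ)+1) = 1/((N:ℝ)+1) + 1/((N:ℝ)+1) := by ring
    linarith
  obtain ⟨xb, hxb⟩ := cauchySeq_tendsto_of_complete hcauchy
  have hxbS : xb ∈ S := hS.mem_of_tendsto hxb (Filter.Eventually.of_forall hxS)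
  have hJx : Tendsto (fun n => J (x n)) atTop (𝓝 μ) := by
    have hub : ∀ n, μ ≤ J (x n) := fun n => hμle _ (hxS n)
    have ht : Tendsto (fun n : ℕ => μ + 1/((n:ℝ)+1)) atTop (𝓝 μ) := by
      have := tendsto_one_div_add_atTop_nhds_zero_nat (𝕜 := ℝ)
      have h2 := tendsto_const_nhds (x := μ) (f := atTop (α := ℕ)) |>.add this
      simpa using h2
    exact tendsto_of_tendsto_of_tendsto_of_le_of_le tendsto_const_nhds ht hub
      (fun n => (hxJ n).le)
  have hJxb : J xb = μ := tendsto_nhds_unique ((hcont.tendsto xb).comp hxb) hJx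
  refine ⟨xb, hxbS, fun u hu => hJxb ▸ hμle u hu, ?_⟩
  intro w hwS hwmin
  have hJw : J w = μ := le_antisymm (hJxb ▸ hwmin xb hxbS) (hμle w hwS)
  by_contra hne2
  have hpos : 0 < ‖w - xb‖ := by
    rw [norm_pos_iff, sub_ne_zero]; exact hne2
  have h1 := hunif w hwS xb hxbS
  have h2 := hμle _ (hmid w hwS xb hxbS)
  have h3 : 0 < c (‖w - xb‖/2) := hcpos _ (by positivity)
  linarith

/-- Theorem 2 of the paper: under uniform monotonicity of the Gateaux derivative
`J'` and growth at infinity on some relaxed boundary-condition space `Ů_{s₀}`,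
the unique minimizers `ū_s` of `J` on the spaces
`Ů_s = {u | ⟨ψⱼ, Γu⟩ = 0, 1 ≤ j ≤ s}` converge in norm to the unique minimizer
`ū` of `J` on `Ů = ker Γ`, and `J ū_s → J ū`. -/
theorem stmt10 {H V : Type*}
    [NormedAddCommGroup H] [InnerProductSpace ℝ H] [CompleteSpace H]
    [NormedAddCommGroup V] [InnerProductSpace ℝ V] [CompleteSpace V]
    (Γ : H →L[ℝ] V)
    (ψ : ℕ → V)
    (hcomplete : Dense (Submodule.span ℝ (ψ '' {j | 1 ≤ j}) : Set V))
    (Us : ℕ → Set H)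
    (hUs : ∀ s, Us s = {u : H | ∀ j, 1 ≤ j → j ≤ s → (inner ℝ (ψ j) (Γ u) : ℝ) = 0})
    (U : Set H) (hU : U = {u : H | Γ u = 0})
    (J : H → ℝ) (hconv : ConvexOn ℝ Set.univ J) (hcont : Continuous J)
    (J' : H → H)
    (hJ' : ∀ u v : H,
      Tendsto (fun t : ℝ => (J (u + t • v) - J u) / t) (𝓝[≠] 0) (𝓝 (inner ℝ (J' u) v : ℝ)))
    (s₀ : ℕ)
    (hgrow : ∀ M : ℝ, ∃ R > (0:ℝ), ∀ u ∈ Us s₀, R ≤ ‖u‖ → M ≤ J u)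
    (c : ℝ → ℝ) (hc_cont : ContinuousOn c (Set.Ici 0))
    (hc_mono : MonotoneOn c (Set.Ici 0)) (hc0 : c 0 = 0)
    (hcpos : ∀ t : ℝ, 0 < t → 0 < c t)
    (hmonot : ∀ u ∈ Us s₀, ∀ v ∈ Us s₀, c ‖u - v‖ ≤ (inner ℝ (J' u - J' v) (u - v) : ℝ)) :
    ∃ ub : H, (ub ∈ U ∧ ∀ u ∈ U, J ub ≤ J u) ∧
      (∀ w, (w ∈ U ∧ ∀ u ∈ U, J w ≤ J u) → w = ub) ∧
      ∃ ubs : ℕ → H,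
        (∀ s, s₀ ≤ s →
          (ubs s ∈ Us s ∧ ∀ u ∈ Us s, J (ubs s) ≤ J u) ∧
          (∀ w, (w ∈ Us s ∧ ∀ u ∈ Us s, J w ≤ J u) → w = ubs s)) ∧
        Tendsto ubs atTop (𝓝 ub) ∧
        Tendsto (fun s => J (ubs s)) atTop (𝓝 (J ub)) := by
  have hsub : ∀ u w : H, (inner ℝ (J' u) w : ℝ) ≤ J (u + w) - J u :=
    aux_subgrad J hconv J' hJ'
  have hlin : ∀ s (a b : ℝ) (x y : H), x ∈ Us s → y ∈ Us s → a • x + b • y ∈ Us s := by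
    intro s a b x y hx hy
    rw [hUs] at hx hy ⊢
    intro j hj1 hjs
    have hx' := hx j hj1 hjs
    have hy' := hy j hj1 hjs
    rw [Set.mem_setOf_eq] at *
    rw [map_add, map_smul, map_smul, inner_add_right, inner_smul_right, inner_smul_right,
      hx', hy']
    ring
  have hconvUs : ∀ s, Convex ℝ (Us s) := fun s x hx y hy a b ha hb hab =>
    hlin s a b x y hx hy
  have hzero : ∀ s, (0:H) ∈ Us s := by
    intro s; rw [hUs]; intro j _ _; simp
  have hclosed : ∀ s, IsClosed (Us s) := by
    intro s
    have he : Us s = ⋂ j ∈ Set.Icc 1 s, {u : H | (inner ℝ (ψ j) (Γ u) : ℝ) = 0} := by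
      ext u
      simp only [hUs, Set.mem_setOf_eq, Set.mem_iInter, Set.mem_Icc]
      constructor
      · exact fun h j hj => h j hj.1 hj.2
      · exact fun h j h1 h2 => h j ⟨h1, h2⟩
    rw [he]
    exact isClosed_biInter fun j _ =>
      isClosed_eq (Continuous.inner continuous_const Γ.continuous) continuous_const
  have hUsub : ∀ s, U ⊆ Us s := by
    intro s u hu
    rw [hU, Set.mem_setOf_eq] at hu
    rw [hUs]
    intro j _ _
    simp [hu]
  have hmono_s : ∀ {s t : ℕ}, s ≤ t → Us t ⊆ Us s := by
    intro s t hst u hu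
    rw [hUs] at hu ⊢
    exact fun j h1 h2 => hu j h1 (h2.trans hst)
  have hUclosed : IsClosed U := by
    rw [hU]; exact isClosed_eq Γ.continuous continuous_const
  have hUconv : Convex ℝ U := by
    intro x hx y hy a b ha hb hab
    rw [hU, Set.mem_setOf_eq] at hx hy ⊢
    simp [map_add, map_smul, hx, hy]
  have hUne : U.Nonempty := ⟨0, by rw [hU]; simp⟩
  -- lower bound on Us s₀
  obtain ⟨R, hR0, hRg⟩ := hgrow (J 0)
  have hLb : ∀ u ∈ Us s₀, J 0 - ‖J' 0‖ * R ≤ J u := by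
    intro u hu
    rcases le_or_gt R ‖u‖ with h | h
    · have h1 := hRg u hu h
      have h2 : 0 ≤ ‖J' 0‖ * R := by positivity
      linarith
    · have h1 := hsub 0 u
      rw [zero_add] at h1
      have h2 := abs_real_inner_le_norm (J' 0) u
      have h3 := neg_abs_le (inner ℝ (J' 0) u : ℝ)
      have h4 : ‖J' 0‖ * ‖u‖ ≤ ‖J' 0‖ * R :=
        mul_le_mul_of_nonneg_left h.le (norm_nonneg _)
      linarith
  -- uniform convexity on Us s₀
  have hunif0 : ∀ x ∈ Us s₀, ∀ y ∈ Us s₀,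
      (1/2) * c (‖x - y‖/2) ≤ J x + J y - 2 * J ((1/2:ℝ) • (x + y)) := by
    intro x hx y hy
    set d : H := (1/4:ℝ) • (y - x) with hd
    have hx' : x + d ∈ Us s₀ := by
      have h := hlin s₀ (3/4) (1/4) x y hx hy
      have e : x + d = (3/4:ℝ) • x + (1/4:ℝ) • y := by rw [hd]; module
      rwa [e]
    have hy' : y - d ∈ Us s₀ := by
      have h := hlin s₀ (1/4) (3/4) x y hx hy
      have e : y - d = (1/4:ℝ) • x + (3/4:ℝ) • y := by rw [hd]; module
      rwa [e]
    have h1 : (inner ℝ (J' (x + d)) (-d) : ℝ) ≤ J x - J (x + d) := by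
      have := hsub (x + d) (-d)
      rwa [add_neg_cancel_right] at this
    have h2 : (inner ℝ (J' (y - d)) d : ℝ) ≤ J y - J (y - d) := by
      have := hsub (y - d) d
      rwa [sub_add_cancel] at this
    have h3 := hmonot (y - d) hy' (x + d) hx'
    have e1 : y - d - (x + d) = (2:ℝ) • d := by rw [hd]; module
    have e2 : ‖(2:ℝ) • d‖ = ‖x - y‖ / 2 := by
      rw [hd, smul_smul, norm_smul, norm_sub_rev y x]
      norm_num
      ring
    rw [e1] at h3
    rw [e2] at h3
    have e3 : (inner ℝ (J' (y - d) - J' (x + d)) ((2:ℝ) • d) : ℝ)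
        = 2 * ((inner ℝ (J' (y - d)) d : ℝ) - (inner ℝ (J' (x + d)) d : ℝ)) := by
      rw [inner_smul_right, inner_sub_left]
    rw [e3] at h3
    rw [inner_neg_right] at h1
    have h5 : J ((1/2:ℝ) • (x + y)) ≤ (1/2) * J (x + d) + (1/2) * J (y - d) := by
      have hc' := hconv.2 (Set.mem_univ (x + d)) (Set.mem_univ (y - d))
        (by norm_num : (0:ℝ) ≤ 1/2) (by norm_num : (0:ℝ) ≤ 1/2) (by norm_num : (1/2:ℝ) + 1/2 = 1)
      have e : (1/2:ℝ) • (x + d) + (1/2:ℝ) • (y - d) = (1/2:ℝ) • (x + y) := by module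
      rw [e] at hc'
      simpa [smul_eq_mul] using hc'
    linarith
  -- minimizer on U
  obtain ⟨ub, hubU, hubmin, hubuniq⟩ := key_min J hcont c hc_mono hcpos U hUclosed hUconv hUne
    (J 0 - ‖J' 0‖ * R) (fun u hu => hLb u (hUsub s₀ hu))
    (fun x hx y hy => hunif0 x (hUsub s₀ hx) y (hUsub s₀ hy))
  -- minimizers on Us (max s₀ s)
  have hex : ∀ s : ℕ, ∃ xb, xb ∈ Us (max s₀ s) ∧ (∀ u ∈ Us (max s₀ s), J xb ≤ J u) ∧
      ∀ w, w ∈ Us (max s₀ s) → (∀ u ∈ Us (max s₀ s), J w ≤ J u) → w = xb := by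
    intro s
    exact key_min J hcont c hc_mono hcpos (Us (max s₀ s)) (hclosed _) (hconvUs _)
      ⟨0, hzero _⟩ (J 0 - ‖J' 0‖ * R)
      (fun u hu => hLb u (hmono_s (le_max_left _ _) hu))
      (fun x hx y hy => hunif0 x (hmono_s (le_max_left _ _) hx)
        y (hmono_s (le_max_left _ _) hy))
  choose ubs hmem hmin huniq using hex
  refine ⟨ub, ⟨hubU, hubmin⟩, fun w hw => hubuniq w hw.1 hw.2, ubs, ?_, ?_⟩
  · intro s hs
    have e : max s₀ s = s := max_eq_right hs
    refine ⟨⟨?_, ?_⟩, ?_⟩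
    · have := hmem s; rwa [e] at this
    · have := hmin s; rwa [e] at this
    · intro w hw
      have h := huniq s
      rw [e] at h
      exact h w hw.1 hw.2
  -- convergence
  have hφmono : Monotone (fun s => J (ubs s)) := by
    intro s t hst
    exact hmin s (ubs t) (hmono_s (max_le_max le_rfl hst) (hmem t))
  have hφle : ∀ s, J (ubs s) ≤ J ub := fun s => hmin s ub (hUsub _ hubU)
  have hbddφ : BddAbove (Set.range fun s => J (ubs s)) :=
    ⟨J ub, by rintro y ⟨s, rfl⟩; exact hφle s⟩
  have hφtend : Tendsto (fun s => J (ubs s)) atTop (𝓝 (⨆ s, J (ubs s))) :=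
    tendsto_atTop_ciSup hφmono hbddφ
  set ℓ := ⨆ s, J (ubs s) with hℓdef
  have hφleℓ : ∀ s, J (ubs s) ≤ ℓ := fun s => le_ciSup hbddφ s
  have hmemS0 : ∀ s, ubs s ∈ Us s₀ := fun s => hmono_s (le_max_left _ _) (hmem s)
  have hkey : ∀ m n : ℕ, m ≤ n → ∀ ε > (0:ℝ),
      ℓ - (1/2) * c (ε/2) < J (ubs m) → ‖ubs m - ubs n‖ < ε := by
    intro m n hmn ε hε hm
    have hnmem : ubs n ∈ Us (max s₀ m) := hmono_s (max_le_max le_rfl hmn) (hmem n)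
    have hmmem : ubs m ∈ Us (max s₀ m) := hmem m
    have hmidmem : (1/2:ℝ) • (ubs m + ubs n) ∈ Us (max s₀ m) := by
      have := hconvUs (max s₀ m) hmmem hnmem (by norm_num : (0:ℝ) ≤ 1/2)
        (by norm_num : (0:ℝ) ≤ 1/2) (by norm_num)
      rwa [smul_add]
    have h1 := hunif0 (ubs m) (hmemS0 m) (ubs n) (hmemS0 n)
    have h2 : J (ubs m) ≤ J ((1/2:ℝ) • (ubs m + ubs n)) := hmin m _ hmidmem
    have h3 : J (ubs n) ≤ ℓ := hφleℓ n
    have h4 : c (‖ubs m - ubs n‖/2) < c (ε/2) := by linarith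
    by_contra hcon
    push_neg at hcon
    have : c (ε/2) ≤ c (‖ubs m - ubs n‖/2) :=
      hc_mono (Set.mem_Ici.mpr (by positivity)) (Set.mem_Ici.mpr (by positivity))
        (by linarith)
    linarith
  have hcauchy : CauchySeq ubs := by
    rw [Metric.cauchySeq_iff]
    intro ε hε
    have hc2 : 0 < (1/2) * c (ε/2) := by
      have := hcpos (ε/2) (half_pos hε); linarith
    have hev : ∀ᶠ s in atTop, ℓ - (1/2) * c (ε/2) < J (ubs s) :=
      hφtend.eventually (eventually_gt_nhds (by linarith))
    obtain ⟨N, hN⟩ := eventually_atTop.mp hev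
    refine ⟨N, fun m hm n hn => ?_⟩
    rw [dist_eq_norm]
    rcases le_total m n with h | h
    · exact hkey m n h ε hε (hN m hm)
    · rw [norm_sub_rev]
      exact hkey n m h ε hε (hN n hn)
  obtain ⟨ulim, hulim⟩ := cauchySeq_tendsto_of_complete hcauchy
  have hmemU : ulim ∈ U := by
    rw [hU, Set.mem_setOf_eq]
    have hker : ∀ j, 1 ≤ j → (inner ℝ (ψ j) (Γ ulim) : ℝ) = 0 := by
      intro j hj
      have hmem' : ∀ᶠ s in atTop, ubs s ∈ Us j :=
        eventually_atTop.mpr ⟨j, fun s hs =>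
          hmono_s (hs.trans (le_max_right s₀ s)) (hmem s)⟩
      have hin := (hclosed j).mem_of_tendsto hulim hmem'
      rw [hUs] at hin
      exact hin j hj le_rfl
    have hspan : ∀ z ∈ (Submodule.span ℝ (ψ '' {j | 1 ≤ j}) : Set V),
        (inner ℝ z (Γ ulim) : ℝ) = 0 := by
      intro z hz
      induction hz using Submodule.span_induction with
      | mem w hw =>
        obtain ⟨j, hj, rfl⟩ := hw
        exact hker j hj
      | zero => simp
      | add a b _ _ ha hb => rw [inner_add_left, ha, hb]; ring
      | smul r a _ ha => rw [real_inner_smul_left, ha]; ring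
    have hclosedK : IsClosed {z : V | (inner ℝ z (Γ ulim) : ℝ) = 0} :=
      isClosed_eq (Continuous.inner continuous_id continuous_const) continuous_const
    have hcl : closure ((Submodule.span ℝ (ψ '' {j | 1 ≤ j}) : Set V))
        ⊆ {z : V | (inner ℝ z (Γ ulim) : ℝ) = 0} := closure_minimal hspan hclosedK
    have hy : (inner ℝ (Γ ulim) (Γ ulim) : ℝ) = 0 := by
      have : Γ ulim ∈ closure ((Submodule.span ℝ (ψ '' {j | 1 ≤ j}) : Set V)) := by
        rw [hcomplete.closure_eq]; trivial
      exact hcl this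
    exact inner_self_eq_zero.mp hy
  have hJulim : Tendsto (fun s => J (ubs s)) atTop (𝓝 (J ulim)) :=
    (hcont.tendsto ulim).comp hulim
  have hJeq : J ulim = ℓ := tendsto_nhds_unique hJulim hφtend
  have hℓle : ℓ ≤ J ub := ciSup_le hφle
  have hJub : J ulim = J ub := le_antisymm (hJeq ▸ hℓle) (hubmin ulim hmemU)
  have heq : ulim = ub := hubuniq ulim hmemU (fun u hu => hJub ▸ hubmin u hu)
  rw [heq] at hulim hJulim
  exact ⟨hulim, hJulim⟩
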